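/- For every ε > 0, ∑_{d ≤ D} d·√(d*)/(√(d₀)·(d')^{3/2}) ≪ D^{1/2+ε}, where d' is the least m with d | m², d* = (d')²/d is the square-free kernel, and d₀ is the least m with d | m³. -/

import Mathlib

/-- `cube0 d` is the least positive natural number `m` with `d ∣ m ^ 3`. -/
noncomputable def cube0 (d : ℕ) : ℕ := sInf {m : ℕ | 0 < m ∧ d ∣ m ^ 3}

/-- `sq0 d` is the least positive natural number `m` with `d ∣ m ^ 2`. -/
noncomputable def sq0 (d : ℕ) : ℕ := sInf {m : ℕ | 0 < m ∧ d ∣ m ^ 2}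

/-- `dstar d = (d')² / d` is the square-free kernel of `d`. -/
noncomputable def dstar (d : ℕ) : ℕ := (sq0 d) ^ 2 / d

lemma gcd_pow_nat (a b n : ℕ) (ha : 0 < a) :
    Nat.gcd (a ^ n) (b ^ n) = Nat.gcd a b ^ n := by
  have hg : 0 < Nat.gcd a b := Nat.gcd_pos_of_pos_left b ha
  have hcop : Nat.Coprime (a / Nat.gcd a b) (b / Nat.gcd a b) :=
    Nat.coprime_div_gcd_div_gcd hg
  have ha' : a = Nat.gcd a b * (a / Nat.gcd a b) :=
    (Nat.mul_div_cancel' (Nat.gcd_dvd_left a b)).symm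
  have hb' : b = Nat.gcd a b * (b / Nat.gcd a b) :=
    (Nat.mul_div_cancel' (Nat.gcd_dvd_right a b)).symm
  calc Nat.gcd (a ^ n) (b ^ n)
      = Nat.gcd ((Nat.gcd a b * (a / Nat.gcd a b)) ^ n)
          ((Nat.gcd a b * (b / Nat.gcd a b)) ^ n) := by rw [← ha', ← hb']
    _ = Nat.gcd a b ^ n := by
        rw [mul_pow, mul_pow, Nat.gcd_mul_left,
          Nat.Coprime.pow n n hcop, mul_one]

lemma sq0_pos {d : ℕ} (hd : 0 < d) : 0 < sq0 d :=
  (Nat.sInf_mem (⟨d, hd, dvd_pow_self d two_ne_zero⟩ :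
    {m : ℕ | 0 < m ∧ d ∣ m ^ 2}.Nonempty)).1

lemma dvd_sq0_sq {d : ℕ} (hd : 0 < d) : d ∣ sq0 d ^ 2 :=
  (Nat.sInf_mem (⟨d, hd, dvd_pow_self d two_ne_zero⟩ :
    {m : ℕ | 0 < m ∧ d ∣ m ^ 2}.Nonempty)).2

lemma cube0_pos {d : ℕ} (hd : 0 < d) : 0 < cube0 d :=
  (Nat.sInf_mem (⟨d, hd, dvd_pow_self d three_ne_zero⟩ :
    {m : ℕ | 0 < m ∧ d ∣ m ^ 3}.Nonempty)).1

lemma dvd_cube0_cube {d : ℕ} (hd : 0 < d) : d ∣ cube0 d ^ 3 :=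
  (Nat.sInf_mem (⟨d, hd, dvd_pow_self d three_ne_zero⟩ :
    {m : ℕ | 0 < m ∧ d ∣ m ^ 3}.Nonempty)).2

lemma sq0_le {d m : ℕ} (hm : 0 < m) (h : d ∣ m ^ 2) : sq0 d ≤ m := Nat.sInf_le ⟨hm, h⟩
lemma cube0_le {d m : ℕ} (hm : 0 < m) (h : d ∣ m ^ 3) : cube0 d ≤ m := Nat.sInf_le ⟨hm, h⟩

lemma sq0_dvd {d m : ℕ} (hd : 0 < d) (hm : 0 < m) (h : d ∣ m ^ 2) : sq0 d ∣ m := by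
  have hqpos := sq0_pos hd
  have hdvd : d ∣ Nat.gcd (sq0 d) m ^ 2 := by
    rw [← gcd_pow_nat (sq0 d) m 2 hqpos]
    exact Nat.dvd_gcd (dvd_sq0_sq hd) h
  have h1 : sq0 d ≤ Nat.gcd (sq0 d) m :=
    sq0_le (Nat.gcd_pos_of_pos_left m hqpos) hdvd
  have h2 : Nat.gcd (sq0 d) m ≤ sq0 d := Nat.le_of_dvd hqpos (Nat.gcd_dvd_left _ m)
  have h3 : Nat.gcd (sq0 d) m = sq0 d := le_antisymm h2 h1
  rw [← h3]; exact Nat.gcd_dvd_right _ m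

lemma cube0_dvd {d m : ℕ} (hd : 0 < d) (hm : 0 < m) (h : d ∣ m ^ 3) : cube0 d ∣ m := by
  have hqpos := cube0_pos hd
  have hdvd : d ∣ Nat.gcd (cube0 d) m ^ 3 := by
    rw [← gcd_pow_nat (cube0 d) m 3 hqpos]
    exact Nat.dvd_gcd (dvd_cube0_cube hd) h
  have h1 : cube0 d ≤ Nat.gcd (cube0 d) m :=
    cube0_le (Nat.gcd_pos_of_pos_left m hqpos) hdvd
  have h2 : Nat.gcd (cube0 d) m ≤ cube0 d := Nat.le_of_dvd hqpos (Nat.gcd_dvd_left _ m)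
  have h3 : Nat.gcd (cube0 d) m = cube0 d := le_antisymm h2 h1
  rw [← h3]; exact Nat.gcd_dvd_right _ m

lemma sq0_dvd_self {d : ℕ} (hd : 0 < d) : sq0 d ∣ d :=
  sq0_dvd hd hd (dvd_pow_self d two_ne_zero)
lemma cube0_dvd_self {d : ℕ} (hd : 0 < d) : cube0 d ∣ d :=
  cube0_dvd hd hd (dvd_pow_self d three_ne_zero)

lemma dstar_mul_self {d : ℕ} (hd : 0 < d) : d * dstar d = sq0 d ^ 2 :=
  Nat.mul_div_cancel' (dvd_sq0_sq hd)

lemma dstar_squarefree {d : ℕ} (hd : 0 < d) : Squarefree (dstar d) := by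
  rw [Nat.squarefree_iff_prime_squarefree]
  intro p hp hpp
  have hqpos := sq0_pos hd
  have h1 : p * p * d ∣ sq0 d ^ 2 := by
    rw [← dstar_mul_self hd]
    obtain ⟨t, ht⟩ := hpp
    exact ⟨t, by rw [ht]; ring⟩
  have hpq : p ∣ sq0 d := hp.dvd_of_dvd_pow (dvd_trans ⟨p * d, by ring⟩ h1 : p ∣ sq0 d ^ 2)
  obtain ⟨q', hq'⟩ := hpq
  have hq'pos : 0 < q' := by
    rcases Nat.eq_zero_or_pos q' with h | h
    · exfalso; rw [h, mul_zero] at hq'; omega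
    · exact h
  have hdq' : d ∣ q' ^ 2 := by
    obtain ⟨w, hw⟩ := h1
    refine ⟨w, ?_⟩
    have hp2 : 0 < p ^ 2 := pow_pos hp.pos 2
    have : p ^ 2 * q' ^ 2 = p ^ 2 * (d * w) := by
      have : sq0 d ^ 2 = p ^ 2 * q' ^ 2 := by rw [hq']; ring
      rw [← this, hw]; ring
    exact Nat.eq_of_mul_eq_mul_left hp2 this
  have hle : sq0 d ≤ q' := sq0_le hq'pos hdq'
  have hlt : q' < sq0 d := by
    rw [hq']
    calc q' = 1 * q' := (one_mul q').symm
    _ < p * q' := by have := hp.two_le; nlinarith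
  omega

noncomputable def kk (d : ℕ) : ℕ := d / sq0 d
noncomputable def cc (d : ℕ) : ℕ := cube0 (kk d ^ 2)
noncomputable def bb (d : ℕ) : ℕ := kk d / cc d
noncomputable def mm (d : ℕ) : ℕ := kk d / bb d ^ 3
noncomputable def gg (d : ℕ) : ℕ := Nat.gcd (dstar d) (kk d)
noncomputable def g1 (d : ℕ) : ℕ := Nat.gcd (gg d) (bb d ^ 3)
noncomputable def g2 (d : ℕ) : ℕ := gg d / g1 d
noncomputable def jj (d : ℕ) : ℕ := mm d / g2 d
noncomputable def aa (d : ℕ) : ℕ := dstar d / gg d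

lemma decomp_facts {d : ℕ} (hd : 0 < d) :
    0 < kk d ∧ sq0 d * kk d = d ∧ dstar d * kk d = sq0 d ∧ dstar d * kk d ^ 2 = d := by
  have hq := sq0_pos hd
  have hqd := sq0_dvd_self hd
  have hk : sq0 d * kk d = d := Nat.mul_div_cancel' hqd
  have hkpos : 0 < kk d := by
    rcases Nat.eq_zero_or_pos (kk d) with h | h
    · exfalso; rw [h, mul_zero] at hk; omega
    · exact h
  have hsk : dstar d * kk d = sq0 d := by
    have h1 : (dstar d * kk d) * sq0 d = sq0 d * sq0 d := by
      calc (dstar d * kk d) * sq0 d = dstar d * (sq0 d * kk d) := by ring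
      _ = dstar d * d := by rw [hk]
      _ = sq0 d * sq0 d := by
          have := dstar_mul_self hd
          rw [mul_comm (dstar d) d, this, sq]
    exact Nat.eq_of_mul_eq_mul_right hq h1
  refine ⟨hkpos, hk, hsk, ?_⟩
  calc dstar d * kk d ^ 2 = (dstar d * kk d) * kk d := by ring
  _ = sq0 d * kk d := by rw [hsk]
  _ = d := hk

lemma kk_facts {d : ℕ} (hd : 0 < d) :
    0 < bb d ∧ bb d * cc d = kk d ∧ bb d ^ 3 * mm d = kk d ∧ cc d ∣ cube0 d := by
  obtain ⟨hkpos, hk, hsk, hsk2⟩ := decomp_facts hd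
  have hk2pos : 0 < kk d ^ 2 := pow_pos hkpos 2
  have hcpos : 0 < cc d := cube0_pos hk2pos
  have hcdvd : cc d ∣ kk d :=
    cube0_dvd hk2pos hkpos (by rw [show kk d ^ 3 = kk d ^ 2 * kk d by ring]; exact ⟨kk d, rfl⟩)
  have hbc : bb d * cc d = kk d := by
    rw [bb, Nat.div_mul_cancel hcdvd]
  have hbpos : 0 < bb d := by
    rcases Nat.eq_zero_or_pos (bb d) with h | h
    · exfalso; rw [h, zero_mul] at hbc; omega
    · exact h
  have hb2c : bb d ^ 2 ∣ cc d := by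
    have h1 : kk d ^ 2 ∣ cc d ^ 3 := dvd_cube0_cube hk2pos
    have h2 : (bb d ^ 2) * cc d ^ 2 ∣ cc d * cc d ^ 2 := by
      calc (bb d ^ 2) * cc d ^ 2 = kk d ^ 2 := by rw [← hbc]; ring
      _ ∣ cc d ^ 3 := h1
      _ = cc d * cc d ^ 2 := by ring
    exact (Nat.mul_dvd_mul_iff_right (pow_pos hcpos 2)).mp h2
  have hb3k : bb d ^ 3 ∣ kk d := by
    calc bb d ^ 3 = bb d * bb d ^ 2 := by ring
    _ ∣ bb d * cc d := mul_dvd_mul_left _ hb2c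
    _ = kk d := hbc
  have hm : bb d ^ 3 * mm d = kk d := Nat.mul_div_cancel' hb3k
  have hccube : cc d ∣ cube0 d := by
    apply cube0_dvd hk2pos (cube0_pos hd)
    calc kk d ^ 2 ∣ d := ⟨dstar d, hsk2.symm.trans (mul_comm _ _)⟩
    _ ∣ cube0 d ^ 3 := dvd_cube0_cube hd
  exact ⟨hbpos, hbc, hm, hccube⟩

lemma gg_facts {d : ℕ} (hd : 0 < d) :
    aa d * gg d = dstar d ∧ g1 d * g2 d = gg d ∧ g2 d * jj d = mm d ∧
    g1 d ∣ bb d ^ 3 ∧ aa d * kk d ≤ bb d * cube0 d := by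
  obtain ⟨hkpos, hk, hsk, hsk2⟩ := decomp_facts hd
  obtain ⟨hbpos, hbc, hbm, hccube⟩ := kk_facts hd
  have hspos : 0 < dstar d := by
    rcases Nat.eq_zero_or_pos (dstar d) with h | h
    · exfalso; rw [h, zero_mul] at hsk2; omega
    · exact h
  have hmpos : 0 < mm d := by
    rcases Nat.eq_zero_or_pos (mm d) with h | h
    · exfalso; rw [h, mul_zero] at hbm; omega
    · exact h
  have hgpos : 0 < gg d := Nat.gcd_pos_of_pos_left _ hspos
  have hgs : gg d ∣ dstar d := Nat.gcd_dvd_left _ _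
  have hgk : gg d ∣ kk d := Nat.gcd_dvd_right _ _
  have hag : aa d * gg d = dstar d := by
    rw [aa, mul_comm]; exact Nat.mul_div_cancel' hgs
  have hg1pos : 0 < g1 d := Nat.gcd_pos_of_pos_left _ hgpos
  have hg1g : g1 d ∣ gg d := Nat.gcd_dvd_left _ _
  have hg1b : g1 d ∣ bb d ^ 3 := Nat.gcd_dvd_right _ _
  have hg12 : g1 d * g2 d = gg d := by
    rw [g2]; exact Nat.mul_div_cancel' hg1g
  -- g2 ∣ mm
  have hg2m : g2 d ∣ mm d := by
    obtain ⟨w, hw⟩ : gg d ∣ bb d ^ 3 * mm d := by rw [hbm]; exact hgk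
    have hcop : Nat.Coprime (g2 d) (bb d ^ 3 / g1 d) := by
      rw [g2, g1]
      exact Nat.coprime_div_gcd_div_gcd (m := gg d) (n := bb d ^ 3) (by rw [← g1]; exact hg1pos)
    have hdvd : g2 d ∣ (bb d ^ 3 / g1 d) * mm d := by
      refine ⟨w, ?_⟩
      have h1 : g1 d * ((bb d ^ 3 / g1 d) * mm d) = g1 d * (g2 d * w) := by
        calc g1 d * ((bb d ^ 3 / g1 d) * mm d)
            = (g1 d * (bb d ^ 3 / g1 d)) * mm d := by ring
        _ = bb d ^ 3 * mm d := by rw [Nat.mul_div_cancel' hg1b]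
        _ = gg d * w := hw
        _ = (g1 d * g2 d) * w := by rw [hg12]
        _ = g1 d * (g2 d * w) := by ring
      exact Nat.eq_of_mul_eq_mul_left hg1pos h1
    exact Nat.Coprime.dvd_of_dvd_mul_left hcop hdvd
  have hg2j : g2 d * jj d = mm d := Nat.mul_div_cancel' hg2m
  -- coprime aa kk
  have hsqf := dstar_squarefree hd
  have hcop_ak : Nat.Coprime (aa d) (kk d) := by
    by_contra hne
    obtain ⟨p, hp, hpg⟩ := Nat.exists_prime_and_dvd hne
    have hpa : p ∣ aa d := hpg.trans (Nat.gcd_dvd_left _ _)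
    have hpk : p ∣ kk d := hpg.trans (Nat.gcd_dvd_right _ _)
    have hps : p ∣ dstar d := hpa.trans ⟨gg d, hag.symm⟩
    have hpgg : p ∣ gg d := Nat.dvd_gcd hps hpk
    have : p * p ∣ dstar d := by rw [← hag]; exact mul_dvd_mul hpa hpgg
    exact hp.not_isUnit (hsqf p this)
  -- aa * cc ∣ cube0 d
  have hacube : aa d ∣ cube0 d := by
    have hscube : dstar d ∣ cube0 d := by
      rw [← Squarefree.dvd_pow_iff_dvd hsqf (three_ne_zero)]
      have h1 : dstar d ∣ d := ⟨kk d ^ 2, hsk2.symm⟩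
      exact dvd_trans h1 (dvd_cube0_cube hd)
    have h1 : aa d ∣ dstar d := ⟨gg d, hag.symm⟩
    exact dvd_trans h1 hscube
  have hcop_ac : Nat.Coprime (aa d) (cc d) := by
    have hck : cc d ∣ kk d := ⟨bb d, by rw [← hbc]; ring⟩
    exact Nat.Coprime.coprime_dvd_right hck hcop_ak
  have hac : aa d * cc d ∣ cube0 d :=
    Nat.Coprime.mul_dvd_of_dvd_of_dvd hcop_ac hacube hccube
  have hfinal : aa d * kk d ≤ bb d * cube0 d := by
    calc aa d * kk d = bb d * (aa d * cc d) := by rw [← hbc]; ring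
    _ ≤ bb d * cube0 d :=
        Nat.mul_le_mul_left _ (Nat.le_of_dvd (cube0_pos hd) hac)
  exact ⟨hag, hg12, hg2j, hg1b, hfinal⟩

lemma summand_le {d : ℕ} (hd : 0 < d) :
    (d : ℝ) * Real.sqrt (dstar d) / (Real.sqrt (cube0 d) * (sq0 d : ℝ) ^ ((3:ℝ)/2))
      ≤ Real.sqrt (bb d) / Real.sqrt (aa d) := by
  obtain ⟨hkpos, hk, hsk, hsk2⟩ := decomp_facts hd
  obtain ⟨hbpos, hbc, hbm, hccube⟩ := kk_facts hd
  obtain ⟨hag, hg12, hg2j, hg1b, hfinal⟩ := gg_facts hd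
  have hapos : 0 < aa d := by
    rcases Nat.eq_zero_or_pos (aa d) with h | h
    · exfalso
      rw [h, zero_mul] at hag
      have hspos : 0 < dstar d := by
        rcases Nat.eq_zero_or_pos (dstar d) with h' | h'
        · rw [h', zero_mul] at hsk2; omega
        · exact h'
      omega
    · exact h
  have hqpos := sq0_pos hd
  have hc0pos := cube0_pos hd
  set q : ℝ := (sq0 d : ℝ) with hqdef
  set c₀ : ℝ := (cube0 d : ℝ) with hcdef
  set s : ℝ := (dstar d : ℝ) with hsdef
  set k : ℝ := (kk d : ℝ) with hkdef
  have hqR : (0:ℝ) < q := by rw [hqdef]; exact_mod_cast hqpos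
  have hcR : (0:ℝ) < c₀ := by rw [hcdef]; exact_mod_cast hc0pos
  have hkR : (0:ℝ) < k := by rw [hkdef]; exact_mod_cast hkpos
  have hdR : (0:ℝ) < (d:ℝ) := by exact_mod_cast hd
  have hsR : (0:ℝ) ≤ s := by positivity
  -- step 1
  have h32 : q ^ ((3:ℝ)/2) = q * Real.sqrt q := by
    have : ((3:ℝ)/2) = 1 + 1/2 := by norm_num
    rw [this, Real.rpow_add hqR, Real.rpow_one, ← Real.sqrt_eq_rpow]
  -- step 2 : d * √s = √d * q
  have h2 : (d:ℝ) * Real.sqrt s = Real.sqrt d * q := by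
    have hds : (d:ℝ) * s = q ^ 2 := by
      rw [hqdef, hsdef]
      exact_mod_cast congrArg (Nat.cast : ℕ → ℝ) (dstar_mul_self hd)
    calc (d:ℝ) * Real.sqrt s = Real.sqrt ((d:ℝ)^2) * Real.sqrt s := by
          rw [Real.sqrt_sq hdR.le]
    _ = Real.sqrt ((d:ℝ)^2 * s) := (Real.sqrt_mul (by positivity) _).symm
    _ = Real.sqrt ((d:ℝ) * (q^2)) := by rw [← hds]; ring_nf
    _ = Real.sqrt d * Real.sqrt (q^2) := Real.sqrt_mul hdR.le _
    _ = Real.sqrt d * q := by rw [Real.sqrt_sq hqR.le]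
  have h3 : (d:ℝ) * Real.sqrt s / (Real.sqrt c₀ * q ^ ((3:ℝ)/2))
      = Real.sqrt d / (Real.sqrt c₀ * Real.sqrt q) := by
    rw [h32, h2]
    have hsq : (0:ℝ) < Real.sqrt q := Real.sqrt_pos.mpr hqR
    have hsc : (0:ℝ) < Real.sqrt c₀ := Real.sqrt_pos.mpr hcR
    field_simp
  rw [h3]
  -- step 4
  have h4 : Real.sqrt d / (Real.sqrt c₀ * Real.sqrt q) = Real.sqrt ((d:ℝ) / (c₀ * q)) := by
    rw [Real.sqrt_div hdR.le, Real.sqrt_mul hcR.le]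
  rw [h4]
  have h5 : (d:ℝ) / (c₀ * q) = k / c₀ := by
    have hqk : q * k = (d:ℝ) := by rw [hqdef, hkdef]; exact_mod_cast congrArg (Nat.cast : ℕ → ℝ) hk
    rw [div_eq_div_iff (by positivity) hcR.ne', ← hqk]
    ring
  rw [h5]
  have h6 : k / c₀ ≤ (bb d : ℝ) / (aa d : ℝ) := by
    have haR : (0:ℝ) < (aa d : ℝ) := by exact_mod_cast hapos
    rw [div_le_div_iff₀ hcR haR]
    have : (aa d : ℝ) * k ≤ (bb d : ℝ) * c₀ := by rw [hkdef, hcdef]; exact_mod_cast hfinal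
    linarith
  calc Real.sqrt (k / c₀) ≤ Real.sqrt ((bb d : ℝ) / (aa d : ℝ)) := Real.sqrt_le_sqrt h6
  _ = Real.sqrt (bb d) / Real.sqrt (aa d) := Real.sqrt_div (by positivity) _

lemma sum_inv_le (M : ℕ) : ∑ j ∈ Finset.Icc 1 M, (j:ℝ)⁻¹ ≤ 1 + Real.log M := by
  have h1 : ((harmonic M : ℚ) : ℝ) = ∑ j ∈ Finset.Icc 1 M, (j:ℝ)⁻¹ := by
    rw [harmonic_eq_sum_Icc]; push_cast; rfl
  rw [← h1]; exact harmonic_le_one_add_log M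

lemma sum_inv_sqrt_le (M : ℕ) :
    ∑ a ∈ Finset.Icc 1 M, (Real.sqrt a)⁻¹ ≤ 2 * Real.sqrt M := by
  induction M with
  | zero => simp
  | succ M ih =>
    rw [Finset.sum_Icc_succ_top (by omega : 1 ≤ M + 1)]
    have key : (Real.sqrt (M+1))⁻¹ ≤ 2 * Real.sqrt (M+1) - 2 * Real.sqrt M := by
      set x := Real.sqrt ((M:ℝ)+1) with hx
      set y := Real.sqrt (M:ℝ) with hy
      have hx2 : x^2 = (M:ℝ)+1 := Real.sq_sqrt (by positivity)
      have hy2 : y^2 = (M:ℝ) := Real.sq_sqrt (by positivity)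
      have hxpos : 0 < x := Real.sqrt_pos.mpr (by positivity)
      have hynn : 0 ≤ y := Real.sqrt_nonneg _
      rw [inv_le_iff_one_le_mul₀ hxpos]
      nlinarith [sq_nonneg (x - y), sq_nonneg (x + y)]
    have hM1 : ((M:ℝ)+1) = ((M+1 : ℕ) : ℝ) := by push_cast; ring
    calc ∑ a ∈ Finset.Icc 1 M, (Real.sqrt a)⁻¹ + (Real.sqrt (M+1:ℕ))⁻¹
        ≤ 2 * Real.sqrt M + (2 * Real.sqrt ((M:ℝ)+1) - 2 * Real.sqrt M) := by
          push_cast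
          exact add_le_add ih key
    _ = 2 * Real.sqrt ((M+1:ℕ)) := by rw [← hM1]; ring

lemma sum_inv_pow32_le (M : ℕ) :
    ∑ g ∈ Finset.Icc 1 M, ((g:ℝ) * Real.sqrt g)⁻¹ ≤ 3 := by
  have main : ∀ M : ℕ, 1 ≤ M →
      ∑ g ∈ Finset.Icc 1 M, ((g:ℝ) * Real.sqrt g)⁻¹ ≤ 3 - 2 * (Real.sqrt M)⁻¹ := by
    intro M
    induction M with
    | zero => intro h; omega
    | succ M ih =>
      intro _
      rcases Nat.eq_zero_or_pos M with h0 | hMpos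
      · subst h0
        norm_num [Real.sqrt_one]
      rw [Finset.sum_Icc_succ_top (by omega : 1 ≤ M + 1)]
      have hc : ((M+1:ℕ):ℝ) = (M:ℝ)+1 := by push_cast; ring
      have key : (((M+1:ℕ)):ℝ)⁻¹ * (Real.sqrt ((M+1:ℕ):ℝ))⁻¹
          ≤ 2 * (Real.sqrt (M:ℝ))⁻¹ - 2 * (Real.sqrt ((M+1:ℕ):ℝ))⁻¹ := by
        rw [hc]
        set x := Real.sqrt ((M:ℝ)+1) with hxd
        set y := Real.sqrt (M:ℝ) with hyd
        have hx2 : x^2 = (M:ℝ)+1 := Real.sq_sqrt (by positivity)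
        have hy2 : y^2 = (M:ℝ) := Real.sq_sqrt (by positivity)
        have hxpos : 0 < x := Real.sqrt_pos.mpr (by positivity)
        have hypos : 0 < y := Real.sqrt_pos.mpr (by exact_mod_cast hMpos)
        have hyx : y ≤ x := by rw [hxd, hyd]; exact Real.sqrt_le_sqrt (by linarith)
        have hxy1 : (x - y) * (x + y) = 1 := by nlinarith
        have hstep : y ≤ 2*(x-y)*((M:ℝ)+1) := by
          nlinarith [mul_pos hxpos hypos, sq_nonneg (x-y), sq_nonneg (x+y),
            mul_le_mul_of_nonneg_left hyx hypos.le, mul_le_mul_of_nonneg_left hyx hxpos.le]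
        have hdiff : 2 * y⁻¹ - 2 * x⁻¹ - (((M:ℝ)+1)⁻¹ * x⁻¹)
            = (2*(x-y)*((M:ℝ)+1) - y)/(x*y*((M:ℝ)+1)) := by
          field_simp
        have hnn : 0 ≤ (2*(x-y)*((M:ℝ)+1) - y)/(x*y*((M:ℝ)+1)) :=
          div_nonneg (by linarith) (by positivity)
        linarith [hdiff ▸ hnn]
      have hsplit : (((M+1:ℕ):ℝ) * Real.sqrt ((M+1:ℕ)))⁻¹
          = (((M+1:ℕ)):ℝ)⁻¹ * (Real.sqrt ((M+1:ℕ):ℝ))⁻¹ := by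
        rw [mul_inv]
      calc ∑ g ∈ Finset.Icc 1 M, ((g:ℝ) * Real.sqrt g)⁻¹
            + (((M+1:ℕ):ℝ) * Real.sqrt ((M+1:ℕ)))⁻¹
          ≤ (3 - 2 * (Real.sqrt (M:ℝ))⁻¹)
            + (2 * (Real.sqrt (M:ℝ))⁻¹ - 2 * (Real.sqrt ((M+1:ℕ):ℝ))⁻¹) := by
            exact add_le_add (ih hMpos) (by rw [hsplit]; exact key)
      _ = 3 - 2 * (Real.sqrt ((M+1:ℕ):ℝ))⁻¹ := by ring
  rcases Nat.eq_zero_or_pos M with h0 | hM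
  · subst h0; simp
  calc ∑ g ∈ Finset.Icc 1 M, ((g:ℝ) * Real.sqrt g)⁻¹ ≤ 3 - 2 * (Real.sqrt M)⁻¹ := main M hM
  _ ≤ 3 := by
      have : 0 ≤ (Real.sqrt (M:ℝ))⁻¹ := by positivity
      linarith

lemma L1 (N b p q j : ℕ) (hb : 1 ≤ b) (hq : 1 ≤ q) (hj : 1 ≤ j) (hp : 1 ≤ p) :
    ∑ a ∈ Finset.Icc 1 N,
      (if p ≤ b^3 ∧ a * (p * q) * (b^3 * q * j)^2 ≤ N then Real.sqrt b / Real.sqrt a else 0)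
    ≤ (if p ≤ b^3 then (1:ℝ) else 0) *
      (2 * Real.sqrt N * Real.sqrt b *
        ((Real.sqrt p)⁻¹ * ((q:ℝ) * Real.sqrt q)⁻¹ * ((b:ℝ)^3)⁻¹ * ((j:ℝ))⁻¹)) := by
  by_cases hpb : p ≤ b^3
  · set Q : ℕ := (p * q) * (b^3 * q * j)^2 with hQdef
    have hQpos : 0 < Q := by positivity
    set A : ℕ := N / Q with hAdef
    set E : ℝ := Real.sqrt p * ((q:ℝ) * Real.sqrt q) * (b:ℝ)^3 * (j:ℝ) with hEdef
    have hEpos : 0 < E := by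
      rw [hEdef]
      have h1 : (0:ℝ) < Real.sqrt p := Real.sqrt_pos.mpr (by exact_mod_cast hp)
      have h2 : (0:ℝ) < Real.sqrt q := Real.sqrt_pos.mpr (by exact_mod_cast hq)
      have h3 : (0:ℝ) < (q:ℝ) := by exact_mod_cast hq
      have h4 : (0:ℝ) < (b:ℝ) := by exact_mod_cast hb
      have h5 : (0:ℝ) < (j:ℝ) := by exact_mod_cast hj
      positivity
    have hQE : Real.sqrt Q = E := by
      have hsp : Real.sqrt p ^ 2 = (p:ℝ) := Real.sq_sqrt (by positivity)
      have hsq2 : Real.sqrt q ^ 2 = (q:ℝ) := Real.sq_sqrt (by positivity)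
      have hE2 : E^2 = Real.sqrt p ^ 2 * ((q:ℝ)^2 * Real.sqrt q ^ 2) * ((b:ℝ)^3)^2 * (j:ℝ)^2 := by
        rw [hEdef]; ring
      have hQR : ((Q:ℕ):ℝ) = E^2 := by
        rw [hE2, hsp, hsq2, hQdef]
        push_cast
        ring
      rw [hQR, Real.sqrt_sq hEpos.le]
    calc ∑ a ∈ Finset.Icc 1 N,
          (if p ≤ b^3 ∧ a * (p * q) * (b^3 * q * j)^2 ≤ N then Real.sqrt b / Real.sqrt a else 0)
        = ∑ a ∈ (Finset.Icc 1 N).filter (fun a => p ≤ b^3 ∧ a * (p * q) * (b^3 * q * j)^2 ≤ N),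
            Real.sqrt b / Real.sqrt a := (Finset.sum_filter _ _).symm
      _ ≤ ∑ a ∈ Finset.Icc 1 A, Real.sqrt b / Real.sqrt a := by
          apply Finset.sum_le_sum_of_subset_of_nonneg
          · intro a ha
            simp only [Finset.mem_filter, Finset.mem_Icc] at ha
            obtain ⟨⟨ha1, _⟩, _, hle⟩ := ha
            simp only [Finset.mem_Icc]
            refine ⟨ha1, ?_⟩
            rw [hAdef, Nat.le_div_iff_mul_le hQpos]
            calc a * Q = a * (p * q) * (b^3 * q * j)^2 := by rw [hQdef]; ring
            _ ≤ N := hle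
          · intro a _ _
            positivity
      _ = Real.sqrt b * ∑ a ∈ Finset.Icc 1 A, (Real.sqrt a)⁻¹ := by
          rw [Finset.mul_sum]
          exact Finset.sum_congr rfl (fun a _ => div_eq_mul_inv _ _)
      _ ≤ Real.sqrt b * (2 * Real.sqrt A) :=
          mul_le_mul_of_nonneg_left (sum_inv_sqrt_le A) (Real.sqrt_nonneg _)
      _ ≤ Real.sqrt b * (2 * (Real.sqrt N / E)) := by
          apply mul_le_mul_of_nonneg_left _ (Real.sqrt_nonneg _)
          apply mul_le_mul_of_nonneg_left _ (by norm_num : (0:ℝ) ≤ 2)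
          calc Real.sqrt A ≤ Real.sqrt ((N:ℝ) / (Q:ℝ)) := by
                apply Real.sqrt_le_sqrt
                rw [hAdef]
                exact Nat.cast_div_le
          _ = Real.sqrt N / Real.sqrt Q := Real.sqrt_div (by positivity) _
          _ = Real.sqrt N / E := by rw [hQE]
      _ = (if p ≤ b^3 then (1:ℝ) else 0) *
          (2 * Real.sqrt N * Real.sqrt b *
            ((Real.sqrt p)⁻¹ * ((q:ℝ) * Real.sqrt q)⁻¹ * ((b:ℝ)^3)⁻¹ * ((j:ℝ))⁻¹)) := by
          rw [if_pos hpb, one_mul, hEdef]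
          rw [div_eq_mul_inv, mul_inv, mul_inv, mul_inv]
          ring
  · have hzero : ∀ a ∈ Finset.Icc 1 N,
        (if p ≤ b^3 ∧ a * (p * q) * (b^3 * q * j)^2 ≤ N then Real.sqrt b / Real.sqrt a else 0) = 0 := by
      intro a _
      rw [if_neg (by tauto)]
    rw [Finset.sum_congr rfl hzero, Finset.sum_const, smul_zero, if_neg hpb, zero_mul]

lemma sum_ind_inv_sqrt_le (N b : ℕ) (hb : 1 ≤ b) :
    ∑ p ∈ Finset.Icc 1 N, (if p ≤ b^3 then (1:ℝ) else 0) * (Real.sqrt p)⁻¹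
      ≤ 2 * (b:ℝ) * Real.sqrt b := by
  have hbR : (0:ℝ) < (b:ℝ) := by exact_mod_cast hb
  calc ∑ p ∈ Finset.Icc 1 N, (if p ≤ b^3 then (1:ℝ) else 0) * (Real.sqrt p)⁻¹
      = ∑ p ∈ (Finset.Icc 1 N).filter (fun p => p ≤ b^3), (Real.sqrt p)⁻¹ := by
        rw [Finset.sum_filter]
        exact Finset.sum_congr rfl (fun p _ => by by_cases h : p ≤ b^3 <;> simp [h])
    _ ≤ ∑ p ∈ Finset.Icc 1 (b^3), (Real.sqrt p)⁻¹ := by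
        apply Finset.sum_le_sum_of_subset_of_nonneg
        · intro p hp
          simp only [Finset.mem_filter, Finset.mem_Icc] at hp ⊢
          exact ⟨hp.1.1, hp.2⟩
        · intro p _ _; positivity
    _ ≤ 2 * Real.sqrt ((b:ℝ)^3) := by
        have := sum_inv_sqrt_le (b^3)
        calc ∑ p ∈ Finset.Icc 1 (b^3), (Real.sqrt p)⁻¹ ≤ 2 * Real.sqrt ((b^3 : ℕ)) := this
        _ = 2 * Real.sqrt ((b:ℝ)^3) := by push_cast; ring_nf
    _ = 2 * (b:ℝ) * Real.sqrt b := by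
        have h1 : ((b:ℝ) * Real.sqrt b)^2 = (b:ℝ)^3 := by
          have : Real.sqrt b ^ 2 = (b:ℝ) := Real.sq_sqrt hbR.le
          nlinarith [this]
        rw [← h1, Real.sqrt_sq (by positivity)]
        ring

lemma per_b (N b : ℕ) (hN : 1 ≤ N) (hb : 1 ≤ b) :
    ∑ p ∈ Finset.Icc 1 N, ∑ q ∈ Finset.Icc 1 N, ∑ j ∈ Finset.Icc 1 N,
      ((if p ≤ b^3 then (1:ℝ) else 0) *
        (2 * Real.sqrt N * Real.sqrt b *
          ((Real.sqrt p)⁻¹ * ((q:ℝ) * Real.sqrt q)⁻¹ * ((b:ℝ)^3)⁻¹ * ((j:ℝ))⁻¹)))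
    ≤ 12 * Real.sqrt N * (1 + Real.log N) * ((b:ℝ))⁻¹ := by
  have hbR : (0:ℝ) < (b:ℝ) := by exact_mod_cast hb
  have hNR : (1:ℝ) ≤ (N:ℝ) := by exact_mod_cast hN
  have hlog : (0:ℝ) ≤ 1 + Real.log N := by
    have := Real.log_nonneg hNR
    linarith
  have hfact : ∀ p : ℕ,
      ∑ q ∈ Finset.Icc 1 N, ∑ j ∈ Finset.Icc 1 N,
        ((if p ≤ b^3 then (1:ℝ) else 0) *
          (2 * Real.sqrt N * Real.sqrt b *
            ((Real.sqrt p)⁻¹ * ((q:ℝ) * Real.sqrt q)⁻¹ * ((b:ℝ)^3)⁻¹ * ((j:ℝ))⁻¹)))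
      = ((if p ≤ b^3 then (1:ℝ) else 0) * (Real.sqrt p)⁻¹) *
          (2 * Real.sqrt N * Real.sqrt b * ((b:ℝ)^3)⁻¹) *
          ((∑ q ∈ Finset.Icc 1 N, ((q:ℝ) * Real.sqrt q)⁻¹) *
           (∑ j ∈ Finset.Icc 1 N, ((j:ℝ))⁻¹)) := by
    intro p
    rw [Finset.sum_mul_sum]
    rw [Finset.mul_sum]
    apply Finset.sum_congr rfl
    intro q _
    rw [Finset.mul_sum]
    apply Finset.sum_congr rfl
    intro j _
    ring
  calc ∑ p ∈ Finset.Icc 1 N, ∑ q ∈ Finset.Icc 1 N, ∑ j ∈ Finset.Icc 1 N,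
        ((if p ≤ b^3 then (1:ℝ) else 0) *
          (2 * Real.sqrt N * Real.sqrt b *
            ((Real.sqrt p)⁻¹ * ((q:ℝ) * Real.sqrt q)⁻¹ * ((b:ℝ)^3)⁻¹ * ((j:ℝ))⁻¹)))
      = (∑ p ∈ Finset.Icc 1 N, (if p ≤ b^3 then (1:ℝ) else 0) * (Real.sqrt p)⁻¹) *
          ((2 * Real.sqrt N * Real.sqrt b * ((b:ℝ)^3)⁻¹) *
          ((∑ q ∈ Finset.Icc 1 N, ((q:ℝ) * Real.sqrt q)⁻¹) *
           (∑ j ∈ Finset.Icc 1 N, ((j:ℝ))⁻¹))) := by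
        rw [Finset.sum_mul]
        apply Finset.sum_congr rfl
        intro p _
        rw [hfact p]
        ring
    _ ≤ (2 * (b:ℝ) * Real.sqrt b) *
          ((2 * Real.sqrt N * Real.sqrt b * ((b:ℝ)^3)⁻¹) * (3 * (1 + Real.log N))) := by
        apply mul_le_mul
        · exact sum_ind_inv_sqrt_le N b hb
        · apply mul_le_mul_of_nonneg_left
          · apply mul_le_mul
            · exact sum_inv_pow32_le N
            · exact sum_inv_le N
            · apply Finset.sum_nonneg; intro j _; positivity
            · norm_num
          · positivity
        · apply mul_nonneg (by positivity)
          apply mul_nonneg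
          · apply Finset.sum_nonneg; intro q _; positivity
          · apply Finset.sum_nonneg; intro j _; positivity
        · positivity
    _ = 12 * Real.sqrt N * (1 + Real.log N) * ((b:ℝ))⁻¹ := by
        have hsb : Real.sqrt b * Real.sqrt b = (b:ℝ) := Real.mul_self_sqrt hbR.le
        have h2 : ((b:ℝ))*((b:ℝ))*(((b:ℝ))^3)⁻¹ = ((b:ℝ))⁻¹ := by
          field_simp
        calc (2*(b:ℝ)*Real.sqrt b) * ((2*Real.sqrt N*Real.sqrt b*((b:ℝ)^3)⁻¹)*(3*(1+Real.log N)))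
            = 12*Real.sqrt N*(1+Real.log N)*((Real.sqrt b*Real.sqrt b)*((b:ℝ)*((b:ℝ)^3)⁻¹)) := by
              ring
          _ = 12*Real.sqrt N*(1+Real.log N)*((b:ℝ)*((b:ℝ)*((b:ℝ)^3)⁻¹)) := by rw [hsb]
          _ = 12*Real.sqrt N*(1+Real.log N)*((b:ℝ))⁻¹ := by
              rw [← mul_assoc ((b:ℝ)) ((b:ℝ)) _, h2]

lemma quint (N : ℕ) (hN : 1 ≤ N) :
    ∑ b ∈ Finset.Icc 1 N, ∑ p ∈ Finset.Icc 1 N, ∑ q ∈ Finset.Icc 1 N,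
      ∑ j ∈ Finset.Icc 1 N, ∑ a ∈ Finset.Icc 1 N,
      (if p ≤ b^3 ∧ a * (p * q) * (b^3 * q * j)^2 ≤ N
        then Real.sqrt b / Real.sqrt a else 0)
    ≤ 12 * Real.sqrt N * (1 + Real.log N)^2 := by
  have hNR : (1:ℝ) ≤ (N:ℝ) := by exact_mod_cast hN
  have hlog : (0:ℝ) ≤ 1 + Real.log N := by
    have := Real.log_nonneg hNR; linarith
  calc ∑ b ∈ Finset.Icc 1 N, ∑ p ∈ Finset.Icc 1 N, ∑ q ∈ Finset.Icc 1 N,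
        ∑ j ∈ Finset.Icc 1 N, ∑ a ∈ Finset.Icc 1 N,
        (if p ≤ b^3 ∧ a * (p * q) * (b^3 * q * j)^2 ≤ N
          then Real.sqrt b / Real.sqrt a else 0)
      ≤ ∑ b ∈ Finset.Icc 1 N, ∑ p ∈ Finset.Icc 1 N, ∑ q ∈ Finset.Icc 1 N,
        ∑ j ∈ Finset.Icc 1 N,
        ((if p ≤ b^3 then (1:ℝ) else 0) *
          (2 * Real.sqrt N * Real.sqrt b *
            ((Real.sqrt p)⁻¹ * ((q:ℝ) * Real.sqrt q)⁻¹ * ((b:ℝ)^3)⁻¹ * ((j:ℝ))⁻¹))) := by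
        apply Finset.sum_le_sum; intro b hb
        apply Finset.sum_le_sum; intro p hp
        apply Finset.sum_le_sum; intro q hq
        apply Finset.sum_le_sum; intro j hj
        simp only [Finset.mem_Icc] at hb hp hq hj
        exact L1 N b p q j hb.1 hq.1 hj.1 hp.1
    _ ≤ ∑ b ∈ Finset.Icc 1 N, 12 * Real.sqrt N * (1 + Real.log N) * ((b:ℝ))⁻¹ := by
        apply Finset.sum_le_sum; intro b hb
        simp only [Finset.mem_Icc] at hb
        exact per_b N b hN hb.1
    _ = 12 * Real.sqrt N * (1 + Real.log N) * ∑ b ∈ Finset.Icc 1 N, ((b:ℝ))⁻¹ := by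
        rw [Finset.mul_sum]
    _ ≤ 12 * Real.sqrt N * (1 + Real.log N) * (1 + Real.log N) := by
        apply mul_le_mul_of_nonneg_left (sum_inv_le N) (by positivity)
    _ = 12 * Real.sqrt N * (1 + Real.log N)^2 := by ring

lemma decomp_full {d N : ℕ} (hd : 1 ≤ d) (hdN : d ≤ N) :
    (aa d) * (g1 d * g2 d) * ((bb d)^3 * g2 d * jj d)^2 = d ∧
    g1 d ≤ (bb d)^3 ∧
    (1 ≤ bb d ∧ bb d ≤ N) ∧ (1 ≤ g1 d ∧ g1 d ≤ N) ∧ (1 ≤ g2 d ∧ g2 d ≤ N) ∧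
    (1 ≤ jj d ∧ jj d ≤ N) ∧ (1 ≤ aa d ∧ aa d ≤ N) := by
  have hd0 : 0 < d := hd
  obtain ⟨hkpos, hk, hsk, hsk2⟩ := decomp_facts hd0
  obtain ⟨hbpos, hbc, hbm, hccube⟩ := kk_facts hd0
  obtain ⟨hag, hg12, hg2j, hg1b, hfinal⟩ := gg_facts hd0
  have hspos : 0 < dstar d := by
    rcases Nat.eq_zero_or_pos (dstar d) with h | h
    · exfalso; rw [h, zero_mul] at hsk2; omega
    · exact h
  have hggpos : 0 < gg d := Nat.gcd_pos_of_pos_left _ hspos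
  have hg1pos : 0 < g1 d := Nat.gcd_pos_of_pos_left _ hggpos
  have hg2pos : 0 < g2 d := by
    rcases Nat.eq_zero_or_pos (g2 d) with h | h
    · exfalso; rw [h, mul_zero] at hg12; omega
    · exact h
  have hmpos : 0 < mm d := by
    rcases Nat.eq_zero_or_pos (mm d) with h | h
    · exfalso; rw [h, mul_zero] at hbm; omega
    · exact h
  have hjpos : 0 < jj d := by
    rcases Nat.eq_zero_or_pos (jj d) with h | h
    · exfalso; rw [h, mul_zero] at hg2j; omega
    · exact h
  have hapos : 0 < aa d := by
    rcases Nat.eq_zero_or_pos (aa d) with h | h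
    · exfalso; rw [h, zero_mul] at hag; omega
    · exact h
  have hX : (bb d)^3 * g2 d * jj d = kk d := by
    calc (bb d)^3 * g2 d * jj d = (bb d)^3 * (g2 d * jj d) := by ring
    _ = (bb d)^3 * mm d := by rw [hg2j]
    _ = kk d := hbm
  have hident : (aa d) * (g1 d * g2 d) * ((bb d)^3 * g2 d * jj d)^2 = d := by
    rw [hX, hg12]
    calc aa d * gg d * kk d ^ 2 = (aa d * gg d) * kk d ^ 2 := by ring
    _ = dstar d * kk d ^ 2 := by rw [hag]
    _ = d := hsk2
  have hg1le : g1 d ≤ (bb d)^3 := Nat.le_of_dvd (by positivity) hg1b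
  have hident' : ∀ w : ℕ, aa d * (g1 d * g2 d) * ((bb d)^3 * g2 d * jj d)^2 = w → d = w :=
    fun w hw => hident.symm.trans hw
  have hadvd : aa d ∣ d := ⟨(g1 d * g2 d) * ((bb d)^3 * g2 d * jj d)^2, hident' _ (by ring)⟩
  have hg1dvd : g1 d ∣ d := ⟨aa d * g2 d * ((bb d)^3 * g2 d * jj d)^2, hident' _ (by ring)⟩
  have hg2dvd : g2 d ∣ d := ⟨aa d * g1 d * ((bb d)^3 * g2 d * jj d)^2, hident' _ (by ring)⟩
  have hbdvd : bb d ∣ d :=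
    ⟨aa d * (g1 d * g2 d) * ((bb d)^2 * g2 d * jj d) * ((bb d)^3 * g2 d * jj d), hident' _ (by ring)⟩
  have hjdvd : jj d ∣ d :=
    ⟨aa d * (g1 d * g2 d) * ((bb d)^3 * g2 d) * ((bb d)^3 * g2 d * jj d), hident' _ (by ring)⟩
  refine ⟨hident, hg1le,
    ⟨hbpos, le_trans (Nat.le_of_dvd hd0 hbdvd) hdN⟩,
    ⟨hg1pos, le_trans (Nat.le_of_dvd hd0 hg1dvd) hdN⟩,
    ⟨hg2pos, le_trans (Nat.le_of_dvd hd0 hg2dvd) hdN⟩,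
    ⟨hjpos, le_trans (Nat.le_of_dvd hd0 hjdvd) hdN⟩,
    ⟨hapos, le_trans (Nat.le_of_dvd hd0 hadvd) hdN⟩⟩

lemma compare (N : ℕ) :
    ∑ d ∈ Finset.Icc 1 N, ((d : ℝ) * Real.sqrt (dstar d) /
        (Real.sqrt (cube0 d) * (sq0 d : ℝ) ^ ((3 : ℝ) / 2)))
    ≤ ∑ b ∈ Finset.Icc 1 N, ∑ p ∈ Finset.Icc 1 N, ∑ q ∈ Finset.Icc 1 N,
      ∑ j ∈ Finset.Icc 1 N, ∑ a ∈ Finset.Icc 1 N,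
      (if p ≤ b^3 ∧ a * (p * q) * (b^3 * q * j)^2 ≤ N
        then Real.sqrt b / Real.sqrt a else 0) := by
  classical
  set F : ℕ×ℕ×ℕ×ℕ×ℕ → ℝ := fun t =>
    if t.2.1 ≤ t.1^3 ∧ t.2.2.2.2 * (t.2.1 * t.2.2.1) * (t.1^3 * t.2.2.1 * t.2.2.2.1)^2 ≤ N
      then Real.sqrt t.1 / Real.sqrt t.2.2.2.2 else 0 with hF
  set P : Finset (ℕ×ℕ×ℕ×ℕ×ℕ) :=
    Finset.Icc 1 N ×ˢ Finset.Icc 1 N ×ˢ Finset.Icc 1 N ×ˢ Finset.Icc 1 N ×ˢ Finset.Icc 1 N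
    with hP
  set ι : ℕ → ℕ×ℕ×ℕ×ℕ×ℕ := fun d => (bb d, g1 d, g2 d, jj d, aa d) with hι
  have hFnn : ∀ t, 0 ≤ F t := by
    intro t
    rw [hF]
    dsimp only
    split
    · positivity
    · exact le_refl 0
  have hle : ∀ d ∈ Finset.Icc 1 N,
      (d : ℝ) * Real.sqrt (dstar d) / (Real.sqrt (cube0 d) * (sq0 d : ℝ) ^ ((3 : ℝ) / 2))
        ≤ F (ι d) := by
    intro d hd
    simp only [Finset.mem_Icc] at hd
    obtain ⟨hident, hg1le, _, _, _, _, _⟩ := decomp_full hd.1 hd.2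
    have hcond : g1 d ≤ (bb d)^3 ∧
        aa d * (g1 d * g2 d) * ((bb d)^3 * g2 d * jj d)^2 ≤ N := ⟨hg1le, by rw [hident]; exact hd.2⟩
    have : F (ι d) = Real.sqrt (bb d) / Real.sqrt (aa d) := by
      rw [hF, hι]
      exact if_pos hcond
    rw [this]
    exact summand_le hd.1
  have hmem : ∀ d ∈ Finset.Icc 1 N, ι d ∈ P := by
    intro d hd
    simp only [Finset.mem_Icc] at hd
    obtain ⟨_, _, hb, h1, h2, hj, ha⟩ := decomp_full hd.1 hd.2
    rw [hP, hι]
    simp only [Finset.mem_product, Finset.mem_Icc]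
    exact ⟨hb, h1, h2, hj, ha⟩
  have hinj : ∀ x ∈ Finset.Icc 1 N, ∀ y ∈ Finset.Icc 1 N, ι x = ι y → x = y := by
    intro x hx y hy hxy
    simp only [Finset.mem_Icc] at hx hy
    obtain ⟨hidx, _, _, _, _, _, _⟩ := decomp_full hx.1 hx.2
    obtain ⟨hidy, _, _, _, _, _, _⟩ := decomp_full hy.1 hy.2
    rw [hι] at hxy
    simp only [Prod.mk.injEq] at hxy
    obtain ⟨e1, e2, e3, e4, e5⟩ := hxy
    rw [← hidx, ← hidy, e1, e2, e3, e4, e5]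
  calc ∑ d ∈ Finset.Icc 1 N, ((d : ℝ) * Real.sqrt (dstar d) /
        (Real.sqrt (cube0 d) * (sq0 d : ℝ) ^ ((3 : ℝ) / 2)))
      ≤ ∑ d ∈ Finset.Icc 1 N, F (ι d) := Finset.sum_le_sum hle
    _ = ∑ t ∈ (Finset.Icc 1 N).image ι, F t := (Finset.sum_image hinj).symm
    _ ≤ ∑ t ∈ P, F t := by
        apply Finset.sum_le_sum_of_subset_of_nonneg
        · exact Finset.image_subset_iff.mpr hmem
        · intro t _ _; exact hFnn t
    _ = ∑ b ∈ Finset.Icc 1 N, ∑ p ∈ Finset.Icc 1 N, ∑ q ∈ Finset.Icc 1 N,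
        ∑ j ∈ Finset.Icc 1 N, ∑ a ∈ Finset.Icc 1 N,
        (if p ≤ b^3 ∧ a * (p * q) * (b^3 * q * j)^2 ≤ N
          then Real.sqrt b / Real.sqrt a else 0) := by
        rw [hP, hF]
        rw [Finset.sum_product]
        apply Finset.sum_congr rfl; intro b _
        rw [Finset.sum_product]
        apply Finset.sum_congr rfl; intro p _
        rw [Finset.sum_product]
        apply Finset.sum_congr rfl; intro q _
        rw [Finset.sum_product]

theorem sum_first_estimate :
    ∀ ε : ℝ, 0 < ε → ∃ C : ℝ, 0 < C ∧ ∀ D : ℝ, 1 ≤ D →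
      ∑ d ∈ Finset.Icc 1 ⌊D⌋₊,
          (d : ℝ) * Real.sqrt (dstar d) /
            (Real.sqrt (cube0 d) * (sq0 d : ℝ) ^ ((3 : ℝ) / 2))
        ≤ C * D ^ (1 / 2 + ε) := by
  intro ε hε
  refine ⟨12 * (1 + 2/ε)^2, by positivity, ?_⟩
  intro D hD
  set N := ⌊D⌋₊ with hNdef
  have hN1 : 1 ≤ N := Nat.one_le_floor_iff _ |>.mpr hD
  have hDpos : (0:ℝ) < D := lt_of_lt_of_le one_pos hD
  have hND : (N:ℝ) ≤ D := Nat.floor_le hDpos.le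
  have hNR1 : (1:ℝ) ≤ (N:ℝ) := by exact_mod_cast hN1
  have hmain : ∑ d ∈ Finset.Icc 1 N,
      (d : ℝ) * Real.sqrt (dstar d) / (Real.sqrt (cube0 d) * (sq0 d : ℝ) ^ ((3 : ℝ) / 2))
      ≤ 12 * Real.sqrt N * (1 + Real.log N)^2 :=
    le_trans (compare N) (quint N hN1)
  have hsqrt : Real.sqrt N ≤ D ^ ((1:ℝ)/2) := by
    rw [← Real.sqrt_eq_rpow]
    exact Real.sqrt_le_sqrt hND
  have hlogN : (0:ℝ) ≤ 1 + Real.log N := by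
    have := Real.log_nonneg hNR1; linarith
  have hlog2 : (1 + Real.log N)^2 ≤ (1 + 2/ε)^2 * D ^ ε := by
    have h1 : Real.log N ≤ Real.log D := Real.log_le_log (by linarith) hND
    have h2 : Real.log D ≤ D ^ (ε/2) / (ε/2) := Real.log_le_rpow_div hDpos.le (by positivity)
    have hDrp1 : (1:ℝ) ≤ D ^ (ε/2) := Real.one_le_rpow hD (by positivity)
    have h3 : 1 + Real.log N ≤ (1 + 2/ε) * D ^ (ε/2) := by
      have : D ^ (ε/2) / (ε/2) = (2/ε) * D ^ (ε/2) := by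
        field_simp
      calc 1 + Real.log N ≤ 1 + D ^ (ε/2) / (ε/2) := by linarith
      _ = 1 + (2/ε) * D ^ (ε/2) := by rw [this]
      _ ≤ 1 * D ^ (ε/2) + (2/ε) * D ^ (ε/2) := by
          have h4 : (0:ℝ) ≤ 2/ε := by positivity
          nlinarith
      _ = (1 + 2/ε) * D ^ (ε/2) := by ring
    calc (1 + Real.log N)^2 ≤ ((1 + 2/ε) * D ^ (ε/2))^2 := by
          apply sq_le_sq' _ h3
          nlinarith [hlogN, h3]
    _ = (1 + 2/ε)^2 * (D ^ (ε/2))^2 := by ring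
    _ = (1 + 2/ε)^2 * D ^ ε := by
        rw [← Real.rpow_natCast (D ^ (ε/2)) 2, ← Real.rpow_mul hDpos.le]
        norm_num
  calc ∑ d ∈ Finset.Icc 1 N,
      (d : ℝ) * Real.sqrt (dstar d) / (Real.sqrt (cube0 d) * (sq0 d : ℝ) ^ ((3 : ℝ) / 2))
      ≤ 12 * Real.sqrt N * (1 + Real.log N)^2 := hmain
    _ ≤ 12 * (D ^ ((1:ℝ)/2)) * ((1 + 2/ε)^2 * D ^ ε) := by
        apply mul_le_mul
        · apply mul_le_mul_of_nonneg_left hsqrt (by norm_num)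
        · exact hlog2
        · positivity
        · positivity
    _ = 12 * (1 + 2/ε)^2 * (D ^ ((1:ℝ)/2) * D ^ ε) := by ring
    _ = 12 * (1 + 2/ε)^2 * D ^ (1/2 + ε) := by
        rw [← Real.rpow_add hDpos]
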